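/- Let τ, γ, λ > 0, U ∈ ℝ^{p×n}, V ∈ ℝ^{p×m}, and define Ψ(W) := (τ/2)‖U − VW‖² + (γ/2)‖W‖² for W ∈ ℝ^{m×n}. Suppose W* ∈ ℝ^{m×n} is a P-stationary point for some β > 0, i.e., W* ∈ Prox_{βλ‖·‖_{0,2}}(W* − β∇Ψ(W*)). Then for every W ∈ ℝ^{m×n} with ‖W − W*‖ < √(βλ/(2m²)) one has Ψ(W) + λ‖W‖_{0,2} − (Ψ(W*) + λ‖W*‖_{0,2}) ≥ (γ/2)‖W − W*‖². -/

import Mathlib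

set_option autoImplicit false
set_option maxHeartbeats 1000000

open Matrix

/-- Squared Frobenius norm of a matrix. -/
def frobSq {m n : ℕ} (W : Matrix (Fin m) (Fin n) ℝ) : ℝ :=
  ∑ i, ∑ j, (W i j) ^ 2

/-- Frobenius norm of a matrix. -/
noncomputable def frobNorm {m n : ℕ} (W : Matrix (Fin m) (Fin n) ℝ) : ℝ :=
  Real.sqrt (frobSq W)

open Classical in
/-- `‖W‖_{0,2}`: the number of nonzero rows of `W`, as a real number. -/
noncomputable def norm02 {m n : ℕ} (W : Matrix (Fin m) (Fin n) ℝ) : ℝ :=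
  ((Finset.univ.filter fun s : Fin m => W s ≠ 0).card : ℝ)

/-- The proximal operator (as a set of global minimizers):
`Prox_β G (H) = argmin_W { G(W) + (1/(2β))‖W − H‖² }`. -/
def ProxSet {m n : ℕ} (β : ℝ) (G : Matrix (Fin m) (Fin n) ℝ → ℝ)
    (H : Matrix (Fin m) (Fin n) ℝ) : Set (Matrix (Fin m) (Fin n) ℝ) :=
  {W | ∀ Z : Matrix (Fin m) (Fin n) ℝ,
    G W + (1 / (2 * β)) * frobSq (W - H) ≤ G Z + (1 / (2 * β)) * frobSq (Z - H)}

/-- The objective `Ψ(W) = (τ/2)‖U − VW‖² + (γ/2)‖W‖²`. -/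
noncomputable def Psi {p m n : ℕ} (τ γ : ℝ) (U : Matrix (Fin p) (Fin n) ℝ)
    (V : Matrix (Fin p) (Fin m) ℝ) (W : Matrix (Fin m) (Fin n) ℝ) : ℝ :=
  (τ / 2) * frobSq (U - V * W) + (γ / 2) * frobSq W

/-- The gradient of `Ψ`, namely `∇Ψ(W) = τ Vᵀ(VW − U) + γ W`. -/
def gradPsi {p m n : ℕ} (τ γ : ℝ) (U : Matrix (Fin p) (Fin n) ℝ)
    (V : Matrix (Fin p) (Fin m) ℝ) (W : Matrix (Fin m) (Fin n) ℝ) :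
    Matrix (Fin m) (Fin n) ℝ :=
  τ • (Vᵀ * (V * W - U)) + γ • W

/-! ### Auxiliary definitions and lemmas -/

/-- Frobenius inner product. -/
def ip {m n : ℕ} (A B : Matrix (Fin m) (Fin n) ℝ) : ℝ :=
  ∑ i, ∑ j, A i j * B i j

/-- Squared Euclidean norm of row `s`. -/
def rsq {m n : ℕ} (A : Matrix (Fin m) (Fin n) ℝ) (s : Fin m) : ℝ :=
  ∑ j, (A s j) ^ 2

lemma frobSq_eq_sum_rsq {m n : ℕ} (A : Matrix (Fin m) (Fin n) ℝ) :
    frobSq A = ∑ s, rsq A s := rfl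

lemma rsq_nonneg {m n : ℕ} (A : Matrix (Fin m) (Fin n) ℝ) (s : Fin m) : 0 ≤ rsq A s :=
  Finset.sum_nonneg fun _ _ => sq_nonneg _

lemma frobSq_nonneg {m n : ℕ} (A : Matrix (Fin m) (Fin n) ℝ) : 0 ≤ frobSq A :=
  Finset.sum_nonneg fun _ _ => rsq_nonneg A _

lemma rsq_le_frobSq {m n : ℕ} (A : Matrix (Fin m) (Fin n) ℝ) (s : Fin m) :
    rsq A s ≤ frobSq A := by
  rw [frobSq_eq_sum_rsq]
  exact Finset.single_le_sum (fun i _ => rsq_nonneg A i) (Finset.mem_univ s)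

lemma frobSq_sub {m n : ℕ} (A B : Matrix (Fin m) (Fin n) ℝ) :
    frobSq (A - B) = frobSq A - 2 * ip A B + frobSq B := by
  simp only [frobSq, ip, Matrix.sub_apply, sub_sq, Finset.sum_add_distrib,
    Finset.sum_sub_distrib, Finset.mul_sum]
  ring_nf

lemma frobSq_add {m n : ℕ} (A B : Matrix (Fin m) (Fin n) ℝ) :
    frobSq (A + B) = frobSq A + 2 * ip A B + frobSq B := by
  simp only [frobSq, ip, Matrix.add_apply, add_sq, Finset.sum_add_distrib, Finset.mul_sum]
  ring_nf

lemma sum3_comm {a b c : ℕ} (f : Fin a → Fin b → Fin c → ℝ) :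
    (∑ s : Fin b, ∑ j : Fin c, ∑ i : Fin a, f i s j) = ∑ i, ∑ j, ∑ s, f i s j := by
  have h : (∑ s : Fin b, ∑ j : Fin c, ∑ i : Fin a, f i s j)
      = ∑ j : Fin c, ∑ i : Fin a, ∑ s : Fin b, f i s j := by
    rw [Finset.sum_comm]
    exact Finset.sum_congr rfl fun j _ => Finset.sum_comm
  rw [h, Finset.sum_comm]

lemma ip_adj {p m n : ℕ} (V : Matrix (Fin p) (Fin m) ℝ) (X : Matrix (Fin p) (Fin n) ℝ)
    (D : Matrix (Fin m) (Fin n) ℝ) : ip (Vᵀ * X) D = ip X (V * D) := by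
  simp only [ip, Matrix.mul_apply, Matrix.transpose_apply, Finset.sum_mul, Finset.mul_sum]
  rw [sum3_comm (fun i s j => V i s * X i j * D s j)]
  exact Finset.sum_congr rfl fun i _ => Finset.sum_congr rfl fun j _ =>
    Finset.sum_congr rfl fun s _ => by ring

lemma ip_grad {p m n : ℕ} (τ γ : ℝ) (U : Matrix (Fin p) (Fin n) ℝ)
    (V : Matrix (Fin p) (Fin m) ℝ) (Ws D : Matrix (Fin m) (Fin n) ℝ) :
    ip (gradPsi τ γ U V Ws) D
      = -(τ * ip (U - V * Ws) (V * D)) + γ * ip Ws D := by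
  have h1 : ip (gradPsi τ γ U V Ws) D
      = τ * ip (Vᵀ * (V * Ws - U)) D + γ * ip Ws D := by
    simp only [ip, gradPsi, Matrix.add_apply, Matrix.smul_apply, smul_eq_mul,
      add_mul, Finset.sum_add_distrib, Finset.mul_sum, mul_assoc]
  have h2 : ip (Vᵀ * (V * Ws - U)) D = -(ip (U - V * Ws) (V * D)) := by
    rw [ip_adj]
    simp only [ip, Matrix.sub_apply, sub_mul, Finset.sum_sub_distrib, ← Finset.sum_neg_distrib]
    ring_nf
  rw [h1, h2]; ring

lemma psi_expand {p m n : ℕ} (τ γ : ℝ) (U : Matrix (Fin p) (Fin n) ℝ)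
    (V : Matrix (Fin p) (Fin m) ℝ) (Ws W : Matrix (Fin m) (Fin n) ℝ) :
    Psi τ γ U V W = Psi τ γ U V Ws + ip (gradPsi τ γ U V Ws) (W - Ws)
      + (τ / 2) * frobSq (V * (W - Ws)) + (γ / 2) * frobSq (W - Ws) := by
  set D := W - Ws with hD
  have hW : W = Ws + D := by rw [hD]; abel
  have e1 : U - V * W = (U - V * Ws) - V * D := by rw [hW, Matrix.mul_add]; abel
  rw [ip_grad]
  unfold Psi
  rw [e1, frobSq_sub, hW, frobSq_add]
  ring

lemma norm02_eq_sum {m n : ℕ} (A : Matrix (Fin m) (Fin n) ℝ) :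
    norm02 A = ∑ i : Fin m, if A i ≠ 0 then (1 : ℝ) else 0 := by
  rw [norm02, Finset.card_filter, Nat.cast_sum]
  exact Finset.sum_congr rfl fun i _ => by split_ifs <;> simp

lemma sum_update_diff {m : ℕ} (f g : Fin m → ℝ) (s : Fin m)
    (h : ∀ i, i ≠ s → f i = g i) : (∑ i, f i) - (∑ i, g i) = f s - g s := by
  rw [← Finset.sum_erase_add _ f (Finset.mem_univ s),
    ← Finset.sum_erase_add _ g (Finset.mem_univ s),
    Finset.sum_congr rfl (fun i hi => h i (Finset.ne_of_mem_erase hi))]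
  ring

theorem pStationary_quadratic_growth
    (p m n : ℕ) (τ γ lam β : ℝ) (hτ : 0 < τ) (hγ : 0 < γ) (hlam : 0 < lam)
    (hβ : 0 < β)
    (U : Matrix (Fin p) (Fin n) ℝ) (V : Matrix (Fin p) (Fin m) ℝ)
    (Wstar : Matrix (Fin m) (Fin n) ℝ)
    (hP : Wstar ∈ ProxSet β (fun W => lam * norm02 W)
        (Wstar - β • gradPsi τ γ U V Wstar)) :
    ∀ W : Matrix (Fin m) (Fin n) ℝ,
      frobNorm (W - Wstar) < Real.sqrt (β * lam / (2 * (m : ℝ) ^ 2)) →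
        Psi τ γ U V W + lam * norm02 W - (Psi τ γ U V Wstar + lam * norm02 Wstar) ≥
          (γ / 2) * frobSq (W - Wstar) := by
  intro W hWlt
  set G : Matrix (Fin m) (Fin n) ℝ := gradPsi τ γ U V Wstar with hGdef
  set H : Matrix (Fin m) (Fin n) ℝ := Wstar - β • G with hHdef
  set D : Matrix (Fin m) (Fin n) ℝ := W - Wstar with hDdef
  -- the prox inequality for each competitor
  simp only [ProxSet, Set.mem_setOf_eq] at hP
  have hprox : ∀ Z : Matrix (Fin m) (Fin n) ℝ,
      lam * norm02 Wstar + (1 / (2 * β)) * frobSq (Wstar - H) ≤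
        lam * norm02 Z + (1 / (2 * β)) * frobSq (Z - H) := hP
  have h2b : (0 : ℝ) < 2 * β := by linarith
  have hc : (0 : ℝ) < 1 / (2 * β) := by positivity
  -- basic entry computation for H
  have hHentry : ∀ s j, H s j = Wstar s j - β * G s j := by
    intro s j; simp [hHdef, Matrix.sub_apply, Matrix.smul_apply, smul_eq_mul]
  have hWmH : ∀ s, rsq (Wstar - H) s = β ^ 2 * rsq G s := by
    intro s
    simp only [rsq, Matrix.sub_apply, hHentry, Finset.mul_sum]
    exact Finset.sum_congr rfl fun j _ => by ring
  -- row-wise prox inequality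
  have row_ineq : ∀ (s : Fin m) (v : Fin n → ℝ),
      (1 / (2 * β)) * (β ^ 2 * rsq G s) ≤
        lam * ((if v ≠ 0 then (1 : ℝ) else 0) - (if Wstar s ≠ 0 then (1 : ℝ) else 0))
          + (1 / (2 * β)) * (∑ j, (v j - H s j) ^ 2) := by
    intro s v
    have h := hprox (Matrix.updateRow Wstar s v)
    have e1 : norm02 (Matrix.updateRow Wstar s v) - norm02 Wstar
        = (if v ≠ 0 then (1 : ℝ) else 0) - (if Wstar s ≠ 0 then (1 : ℝ) else 0) := by
      rw [norm02_eq_sum, norm02_eq_sum,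
        sum_update_diff _ _ s (fun i hi => by rw [Matrix.updateRow_ne hi]),
        Matrix.updateRow_self]
    have e2 : frobSq (Matrix.updateRow Wstar s v - H) - frobSq (Wstar - H)
        = (∑ j, (v j - H s j) ^ 2) - β ^ 2 * rsq G s := by
      rw [frobSq_eq_sum_rsq, frobSq_eq_sum_rsq,
        sum_update_diff _ _ s (fun i hi => by
          simp only [rsq, Matrix.sub_apply, Matrix.updateRow_ne hi]),
        hWmH]
      simp only [rsq, Matrix.sub_apply, Matrix.updateRow_self]
    have h5 : (1 / (2 * β)) * frobSq (Matrix.updateRow Wstar s v - H)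
        - (1 / (2 * β)) * frobSq (Wstar - H)
        = (1 / (2 * β)) * ((∑ j, (v j - H s j) ^ 2) - β ^ 2 * rsq G s) := by
      rw [← mul_sub, e2]
    have h6 : (1 / (2 * β)) * ((∑ j, (v j - H s j) ^ 2) - β ^ 2 * rsq G s)
        = (1 / (2 * β)) * (∑ j, (v j - H s j) ^ 2)
          - (1 / (2 * β)) * (β ^ 2 * rsq G s) := by ring
    have h7 : lam * norm02 (Matrix.updateRow Wstar s v) - lam * norm02 Wstar
        = lam * ((if v ≠ 0 then (1 : ℝ) else 0) - (if Wstar s ≠ 0 then (1 : ℝ) else 0)) := by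
      rw [← mul_sub, e1]
    linarith [h, h5, h6, h7]
  -- rows in the support of Wstar
  have factGamma : ∀ s : Fin m, Wstar s ≠ 0 →
      (∀ j, G s j = 0) ∧ 2 * β * lam ≤ rsq Wstar s := by
    intro s hs
    have h0 := row_ineq s (H s)
    have hzz : (∑ j, (H s j - H s j) ^ 2) = 0 := by simp
    rw [hzz, if_pos hs, mul_zero, add_zero] at h0
    have hG0 : rsq G s = 0 := by
      by_contra hne
      have hpos : 0 < rsq G s := lt_of_le_of_ne (rsq_nonneg G s) (Ne.symm hne)
      have hprod : 0 < (1 / (2 * β)) * (β ^ 2 * rsq G s) :=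
        mul_pos hc (mul_pos (pow_pos hβ 2) hpos)
      have h1 : lam * ((if H s ≠ 0 then (1 : ℝ) else 0) - 1) ≤ 0 := by
        split_ifs <;> nlinarith
      linarith
    have hGj : ∀ j, G s j = 0 := by
      intro j
      have := (Finset.sum_eq_zero_iff_of_nonneg
        (fun j (_ : j ∈ Finset.univ) => sq_nonneg (G s j))).mp hG0 j (Finset.mem_univ j)
      exact pow_eq_zero_iff two_ne_zero |>.mp this
    refine ⟨hGj, ?_⟩
    have h1 := row_ineq s 0
    have hz : (if (0 : Fin n → ℝ) ≠ 0 then (1 : ℝ) else 0) = 0 := by simp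
    rw [hz, if_pos hs, hG0] at h1
    have hsum : (∑ j, ((0 : Fin n → ℝ) j - H s j) ^ 2) = rsq Wstar s := by
      simp only [rsq, Pi.zero_apply]
      exact Finset.sum_congr rfl fun j _ => by rw [hHentry, hGj]; ring
    rw [hsum] at h1
    have hx : lam ≤ (1 / (2 * β)) * rsq Wstar s := by linarith
    have h8 := mul_le_mul_of_nonneg_left hx h2b.le
    have h9 : (2 * β) * ((1 / (2 * β)) * rsq Wstar s) = rsq Wstar s := by
      field_simp
    linarith
  -- rows outside the support of Wstar
  have factN : ∀ s : Fin m, β * rsq G s ≤ 2 * lam := by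
    intro s
    have h0 := row_ineq s (H s)
    have hzz : (∑ j, (H s j - H s j) ^ 2) = 0 := by simp
    rw [hzz, mul_zero, add_zero] at h0
    have hind1 : (if H s ≠ 0 then (1 : ℝ) else 0) ≤ 1 := by split_ifs <;> norm_num
    have hind2 : (0:ℝ) ≤ (if Wstar s ≠ 0 then (1 : ℝ) else 0) := by split_ifs <;> norm_num
    have hx : (1 / (2 * β)) * (β ^ 2 * rsq G s) ≤ lam := by nlinarith
    have h8 := mul_le_mul_of_nonneg_left hx h2b.le
    have h9 : (2 * β) * ((1 / (2 * β)) * (β ^ 2 * rsq G s)) = β * (β * rsq G s) := by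
      field_simp
    have h10 : β * (β * rsq G s) ≤ β * (2 * lam) := by nlinarith
    exact le_of_mul_le_mul_left h10 hβ
  -- bound on frobSq D
  have hfrob : frobSq D < β * lam / (2 * (m : ℝ) ^ 2) := by
    have hq : (0:ℝ) ≤ β * lam / (2 * (m : ℝ) ^ 2) := by positivity
    have h2 := hWlt
    rw [frobNorm] at h2
    nlinarith [Real.sq_sqrt (frobSq_nonneg D), Real.sq_sqrt hq,
      Real.sqrt_nonneg (frobSq D), Real.sqrt_nonneg (β * lam / (2 * (m : ℝ) ^ 2))]
  -- per-row nonnegativity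
  have key : ∀ s : Fin m,
      0 ≤ lam * ((if W s ≠ 0 then (1 : ℝ) else 0) - (if Wstar s ≠ 0 then (1 : ℝ) else 0))
        + ∑ j, G s j * D s j := by
    intro s
    have hm0 : 0 < m := s.pos
    have hm : (1:ℝ) ≤ (m : ℝ) := Nat.one_le_cast.mpr hm0
    have hm2 : (0:ℝ) < 2 * (m : ℝ) ^ 2 := by nlinarith
    have hD2 : frobSq D * (2 * (m : ℝ) ^ 2) < β * lam := by
      have := (lt_div_iff₀ hm2).mp hfrob
      linarith
    have hDrow : 2 * rsq D s < β * lam := by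
      have h1 := rsq_le_frobSq D s
      have h2 := frobSq_nonneg D
      have h3 : frobSq D * 2 ≤ frobSq D * (2 * (m : ℝ) ^ 2) :=
        mul_le_mul_of_nonneg_left (show (2:ℝ) ≤ 2 * (m : ℝ) ^ 2 by nlinarith) h2
      linarith
    by_cases hs : Wstar s ≠ 0
    · obtain ⟨hGj, hWs⟩ := factGamma s hs
      have hzero : (∑ j, G s j * D s j) = 0 :=
        Finset.sum_eq_zero fun j _ => by rw [hGj]; ring
      have hWnz : W s ≠ 0 := by
        intro hW0
        have : rsq D s = rsq Wstar s := by
          simp only [rsq, hDdef, Matrix.sub_apply]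
          exact Finset.sum_congr rfl fun j _ => by
            rw [show W s j = 0 from congrFun hW0 j]; ring
        nlinarith
      rw [if_pos hs, if_pos hWnz, hzero]
      norm_num
    · push_neg at hs
      rw [if_neg (show ¬(Wstar s ≠ 0) by simp [hs])]
      by_cases hW0 : W s ≠ 0
      · rw [if_pos hW0]
        set t := ∑ j, G s j * D s j with ht
        have hcs : t ^ 2 ≤ rsq G s * rsq D s := Finset.sum_mul_sq_le_sq_mul_sq _ _ _
        have hGb := factN s
        have ha := rsq_nonneg G s
        have hb := rsq_nonneg D s
        have hab : rsq G s * rsq D s ≤ lam ^ 2 := by nlinarith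
        nlinarith [sq_nonneg (t + lam)]
      · push_neg at hW0
        rw [if_neg (show ¬(W s ≠ 0) by simp [hW0])]
        have hzero : (∑ j, G s j * D s j) = 0 :=
          Finset.sum_eq_zero fun j _ => by
            rw [show D s j = 0 by simp [hDdef, Matrix.sub_apply,
              congrFun hW0 j, congrFun hs j]]
            ring
        rw [hzero]; norm_num
  -- sum the per-row inequalities
  have hsum : 0 ≤ lam * (norm02 W - norm02 Wstar) + ip G D := by
    rw [norm02_eq_sum, norm02_eq_sum, ← Finset.sum_sub_distrib, Finset.mul_sum, ip,
      ← Finset.sum_add_distrib]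
    exact Finset.sum_nonneg fun s _ => key s
  have hexp := psi_expand τ γ U V Wstar W
  have hVD := frobSq_nonneg (V * D)
  rw [← hDdef] at hexp
  rw [← hGdef] at hexp
  nlinarith [hexp, hsum, hVD]
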